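/- arXiv:2405.00785 — 3 statements merged into one kernel-verified Lean document; each statement's English description precedes it below -/
import Mathlib

section
/- Let H be a finite-dimensional complex inner product space, H a self-adjoint operator, Q any operator, and Ψ a unit vector with H Ψ = 0 and QΨ ≠ 0. Set |k⟩ = QΨ/‖QΨ‖ and ε = ⟨k|H|k⟩. Then the energy variance satisfies ⟨k|(H - ε)²|k⟩ = ⟨Ψ| [H,Q]† [H,Q] |Ψ⟩ / ‖QΨ‖² - ε². -/
open ContinuousLinearMap

/-- Variance identity behind the quasi-Nambu-Goldstone theorem: with
`|k⟩ = QΨ/‖QΨ‖`, `ε = ⟨k|H|k⟩`, and `H Ψ = 0`,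
`⟨k|(H-ε)²|k⟩ = ⟨Ψ| [H,Q]† [H,Q] |Ψ⟩ / ‖QΨ‖² - ε²`. -/
theorem stmt_2 {V : Type*} [NormedAddCommGroup V] [InnerProductSpace ℂ V]
    [FiniteDimensional ℂ V]
    (H Q : V →L[ℂ] V) (hH : IsSelfAdjoint H)
    (Ψ : V) (hΨ : ‖Ψ‖ = 1) (hzero : H Ψ = 0) (hne : Q Ψ ≠ 0)
    (kv : V) (hkv : kv = (‖Q Ψ‖ : ℂ)⁻¹ • Q Ψ)
    (ε : ℂ) (hε : ε = (inner ℂ kv (H kv) : ℂ))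
    (C : V →L[ℂ] V) (hC : C = H ∘L Q - Q ∘L H) :
    (inner ℂ kv (((H - ε • (1 : V →L[ℂ] V)) ∘L (H - ε • (1 : V →L[ℂ] V))) kv) : ℂ) =
      (inner ℂ Ψ ((ContinuousLinearMap.adjoint C ∘L C) Ψ) : ℂ) / (‖Q Ψ‖ : ℂ) ^ 2
        - ε ^ 2 := by
  have hn : (‖Q Ψ‖ : ℂ) ≠ 0 := by
    exact_mod_cast Complex.ofReal_ne_zero.mpr (norm_ne_zero_iff.mpr hne)
  have hCΨ : C Ψ = H (Q Ψ) := by simp [hC, hzero]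
  have hkn : ‖kv‖ = 1 := by
    rw [hkv, norm_smul]
    simp [norm_ne_zero_iff.mpr hne]
  have hkk : (inner ℂ kv kv : ℂ) = 1 := by
    rw [inner_self_eq_norm_sq_to_K, hkn]; norm_num
  have hHH : (inner ℂ kv (H (H kv)) : ℂ) = inner ℂ (H kv) (H kv) := by
    rw [← adjoint_inner_left, hH.adjoint_eq]
  have hRHS : (inner ℂ Ψ (ContinuousLinearMap.adjoint C (C Ψ)) : ℂ)
      = inner ℂ (H (Q Ψ)) (H (Q Ψ)) := by
    rw [adjoint_inner_right, hCΨ]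
  have hHkv : (inner ℂ (H kv) (H kv) : ℂ)
      = inner ℂ (H (Q Ψ)) (H (Q Ψ)) / (‖Q Ψ‖ : ℂ) ^ 2 := by
    rw [eq_div_iff (pow_ne_zero 2 hn), hkv]
    simp only [map_smul, inner_smul_left, inner_smul_right, map_inv₀, Complex.conj_ofReal]
    field_simp
  simp only [comp_apply, sub_apply, smul_apply, ContinuousLinearMap.one_apply, map_sub, map_smul,
    inner_sub_right, inner_smul_right, hHH, hkk, ← hε]
  rw [hRHS, ← hHkv]
  ring
end

section
/- Let V be a finite-dimensional complex inner product space, ψ ∈ V a unit vector, q^+ an operator on V, and for N ≥ 1 and momentum k = 2πm/N with N ∤ m define the state |k⟩ = ∑_{j=1}^N e^{ikj} q_j^+ (ψ^{⊗N}), where q_j^+ acts on factor j. Then ‖|k⟩‖² = N·Δq², where Δq² = ⟨ψ| (q^+)† q^+ |ψ⟩ - |⟨ψ| q^+ |ψ⟩|². In particular the norm is independent of k (for nonzero k). -/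
open Finset

noncomputable section

variable {ι : Type*} [Fintype ι] [DecidableEq ι]

/-- The `N`-fold product state `ψ ⊗ ψ ⊗ ⋯ ⊗ ψ`, realized concretely in the
Hilbert space `ℓ²(ιᴺ) ≅ (ℂ^ι)^{⊗N}`. -/
def prodState {N : ℕ} (ψ : EuclideanSpace ℂ ι) : EuclideanSpace ℂ (Fin N → ι) :=
  WithLp.toLp 2 (fun x => ∏ i, ψ (x i))

/-- The operator `A` acting on tensor factor `j` (identity on the other factors),
realized concretely on `ℓ²(ιᴺ) ≅ (ℂ^ι)^{⊗N}` via the matrix elements of `A`. -/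
def siteOp {N : ℕ} (A : EuclideanSpace ℂ ι →L[ℂ] EuclideanSpace ℂ ι) (j : Fin N) :
    EuclideanSpace ℂ (Fin N → ι) →L[ℂ] EuclideanSpace ℂ (Fin N → ι) :=
  LinearMap.toContinuousLinearMap
    { toFun := fun f => WithLp.toLp 2 (fun x =>
        ∑ y : ι, A (EuclideanSpace.single y 1) (x j) * f (Function.update x j y))
      map_add' := by
        intro f g
        ext x
        simp [mul_add, Finset.sum_add_distrib]
      map_smul' := by
        intro c f
        ext x
        simp [Finset.mul_sum, mul_left_comm] }

lemma piLp_sum_apply {α κ : Type*} [Fintype κ] (s : Finset α) (f : α → EuclideanSpace ℂ κ) (i : κ) :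
    (∑ a ∈ s, f a) i = ∑ a ∈ s, f a i := by
  simp [WithLp.ofLp_sum]

lemma qp_apply (qp : EuclideanSpace ℂ ι →L[ℂ] EuclideanSpace ℂ ι) (ψ : EuclideanSpace ℂ ι) (a : ι) :
    qp ψ a = ∑ y, ψ y * qp (EuclideanSpace.single y 1) a := by
  have h : ψ = ∑ y, ψ y • EuclideanSpace.single y (1:ℂ) := by
    ext i
    rw [piLp_sum_apply]
    simp [EuclideanSpace.single_apply]
  conv_lhs => rw [h, map_sum]
  rw [piLp_sum_apply]
  simp

lemma siteOp_prodState {N : ℕ} (qp : EuclideanSpace ℂ ι →L[ℂ] EuclideanSpace ℂ ι)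
    (ψ : EuclideanSpace ℂ ι) (j : Fin N) (x : Fin N → ι) :
    siteOp qp j (prodState ψ) x
      = ∏ i, Function.update (fun _ : Fin N => (fun y => ψ y : ι → ℂ)) j (fun y => qp ψ y) i (x i) := by
  have hL : siteOp qp j (prodState ψ) x
      = ∑ y : ι, qp (EuclideanSpace.single y 1) (x j) * prodState ψ (Function.update x j y) := rfl
  have hupd : ∀ y : ι, prodState (N := N) ψ (Function.update x j y)
      = ψ y * ∏ i ∈ univ.erase j, ψ (x i) := by
    intro y
    show (∏ i, ψ (Function.update x j y i)) = _
    have h1 : ∀ i : Fin N, ψ (Function.update x j y i)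
        = Function.update (fun i => ψ (x i)) j (ψ y) i := by
      intro i
      by_cases h : i = j
      · subst h; rw [Function.update_self, Function.update_self]
      · rw [Function.update_of_ne h, Function.update_of_ne h]
    rw [Finset.prod_congr rfl (fun i _ => h1 i), Finset.prod_update_of_mem (mem_univ j),
      Finset.sdiff_singleton_eq_erase]
  have hR : ∀ i : Fin N,
      Function.update (fun _ : Fin N => (fun y => ψ y : ι → ℂ)) j (fun y => qp ψ y) i (x i)
      = Function.update (fun i : Fin N => ψ (x i)) j (qp ψ (x j)) i := by
    intro i
    by_cases h : i = j
    · subst h; rw [Function.update_self, Function.update_self]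
    · rw [Function.update_of_ne h, Function.update_of_ne h]
  rw [hL, Finset.sum_congr rfl (fun y _ => by rw [hupd y]),
    Finset.prod_congr rfl (fun i _ => hR i),
    Finset.prod_update_of_mem (mem_univ j), Finset.sdiff_singleton_eq_erase,
    qp_apply qp ψ (x j), Finset.sum_mul]
  exact Finset.sum_congr rfl fun y _ => by ring

omit [DecidableEq ι] in
lemma inner_prodform {N : ℕ} (f g : Fin N → (ι → ℂ)) :
    (inner (𝕜 := ℂ) (E := EuclideanSpace ℂ (Fin N → ι))
        (WithLp.toLp 2 (fun x => ∏ i, f i (x i))) (WithLp.toLp 2 (fun x => ∏ i, g i (x i))))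
      = ∏ i, ∑ y, (starRingEnd ℂ) (f i y) * g i y := by
  rw [Finset.prod_univ_sum, Fintype.piFinset_univ]
  simp only [PiLp.inner_apply, RCLike.inner_apply]
  refine Finset.sum_congr rfl fun x _ => ?_
  rw [map_prod, ← Finset.prod_mul_distrib]
  exact Finset.prod_congr rfl fun i _ => mul_comm _ _

lemma key_inner {N : ℕ} (qp : EuclideanSpace ℂ ι →L[ℂ] EuclideanSpace ℂ ι)
    (ψ : EuclideanSpace ℂ ι)
    (hψ1 : ∑ y : ι, (starRingEnd ℂ) (ψ y) * ψ y = 1) (j j' : Fin N) :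
    (inner ℂ (siteOp qp j (prodState ψ)) (siteOp qp j' (prodState ψ)) : ℂ) =
      if j = j' then (∑ y : ι, (starRingEnd ℂ) (qp ψ y) * qp ψ y)
      else (starRingEnd ℂ) (∑ y : ι, (starRingEnd ℂ) (ψ y) * qp ψ y)
          * (∑ y : ι, (starRingEnd ℂ) (ψ y) * qp ψ y) := by
  set F : Fin N → Fin N → (ι → ℂ) :=
    fun j => Function.update (fun _ : Fin N => (fun y => ψ y : ι → ℂ)) j (fun y => qp ψ y) with hF
  have hv : ∀ j : Fin N, (siteOp qp j (prodState ψ) : EuclideanSpace ℂ (Fin N → ι))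
      = WithLp.toLp 2 (fun x => ∏ i, F j i (x i)) := fun j => by
        ext x; exact siteOp_prodState qp ψ j x
  rw [hv j, hv j', inner_prodform]
  set h : Fin N → ℂ := fun i => ∑ y : ι, (starRingEnd ℂ) (F j i y) * F j' i y with hh
  have hother : ∀ i : Fin N, i ≠ j → i ≠ j' → h i = 1 := by
    intro i h1 h2
    rw [hh]
    simp only [hF, Function.update_of_ne h1, Function.update_of_ne h2]
    exact hψ1
  by_cases hjj : j = j'
  · subst hjj
    rw [if_pos rfl]
    rw [Finset.prod_eq_single j (fun b _ hb => hother b hb hb) (fun hj => absurd (mem_univ j) hj)]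
    simp only [hh, hF, Function.update_self]
  · rw [if_neg hjj]
    have hj'mem : j' ∈ univ.erase j := Finset.mem_erase.2 ⟨Ne.symm hjj, mem_univ j'⟩
    rw [← Finset.mul_prod_erase univ h (mem_univ j), ← Finset.mul_prod_erase _ h hj'mem]
    have hrest : ∏ i ∈ (univ.erase j).erase j', h i = 1 := by
      refine Finset.prod_eq_one fun b hb => ?_
      have hb' := Finset.mem_erase.1 hb
      have hb'' := Finset.mem_erase.1 hb'.2
      exact hother b hb''.1 hb'.1
    rw [hrest, mul_one]
    have hj : h j = (starRingEnd ℂ) (∑ y : ι, (starRingEnd ℂ) (ψ y) * qp ψ y) := by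
      rw [hh, map_sum]
      simp only [hF, Function.update_self, Function.update_of_ne hjj, map_mul,
        RingHomCompTriple.comp_apply, RingHom.id_apply]
      exact Finset.sum_congr rfl fun y _ => by ring
    have hj' : h j' = ∑ y : ι, (starRingEnd ℂ) (ψ y) * qp ψ y := by
      rw [hh]
      simp only [hF, Function.update_self, Function.update_of_ne (Ne.symm hjj)]
    rw [hj, hj']

lemma exp_sum_zero {N : ℕ} (hN : 1 ≤ N) (m : ℤ) (hm : ¬ (N : ℤ) ∣ m) (k : ℝ)
    (hk : k = 2 * Real.pi * m / N) :
    ∑ j : Fin N, Complex.exp (Complex.I * k * ((j : ℕ) + 1)) = 0 := by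
  set ζ := Complex.exp (Complex.I * k) with hζ
  have hNne : (N : ℝ) ≠ 0 := Nat.cast_ne_zero.2 (by omega)
  have hkN : k * N = 2 * Real.pi * m := by rw [hk]; field_simp
  have hζN : ζ ^ N = 1 := by
    rw [hζ, ← Complex.exp_nat_mul]
    have h2 : (k : ℂ) * N = 2 * Real.pi * m := by exact_mod_cast congrArg Complex.ofReal hkN
    have h3 : (N : ℂ) * (Complex.I * k) = (m : ℂ) * (2 * Real.pi * Complex.I) := by
      linear_combination Complex.I * h2
    rw [h3, Complex.exp_int_mul_two_pi_mul_I]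
  have hζ1 : ζ ≠ 1 := by
    intro h
    rw [hζ, Complex.exp_eq_one_iff] at h
    obtain ⟨n, hn⟩ := h
    have h4 : (k : ℂ) = 2 * Real.pi * n := by
      have h5 : Complex.I * k = Complex.I * (2 * Real.pi * n) := by rw [hn]; ring
      exact mul_left_cancel₀ Complex.I_ne_zero h5
    have hk' : k = 2 * Real.pi * n := by exact_mod_cast h4
    apply hm
    refine ⟨n, ?_⟩
    rw [hk] at hk'
    have hπ : (2 : ℝ) * Real.pi ≠ 0 := by
      simp [Real.pi_ne_zero]
    have h6 : (m : ℝ) = N * n := by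
      apply mul_left_cancel₀ hπ
      field_simp at hk'
      linear_combination (2 * Real.pi) * hk'
    exact_mod_cast h6
  have hterm : ∀ j : Fin N, Complex.exp (Complex.I * k * ((j : ℕ) + 1)) = ζ ^ ((j : ℕ) + 1) := by
    intro j
    rw [hζ, ← Complex.exp_nat_mul]
    congr 1
    push_cast
    ring
  rw [Finset.sum_congr rfl (fun j _ => hterm j),
    Fin.sum_univ_eq_sum_range (fun j => ζ ^ (j + 1)) N]
  have hpull : ∑ j ∈ Finset.range N, ζ ^ (j + 1) = ζ * ∑ j ∈ Finset.range N, ζ ^ j := by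
    rw [Finset.mul_sum]
    exact Finset.sum_congr rfl fun j _ => by rw [pow_succ]; ring
  rw [hpull, geom_sum_eq hζ1, hζN, sub_self, zero_div, mul_zero]

/-- Normalization of the quasi-Nambu-Goldstone mode -/
lemma main_alg {N : ℕ} (c : Fin N → ℂ) (S C : ℂ)
    (hsum0 : ∑ j : Fin N, c j = 0)
    (hone : ∀ j : Fin N, (starRingEnd ℂ) (c j) * c j = 1) :
    ∑ j : Fin N, ∑ j' : Fin N,
        c j' * ((starRingEnd ℂ) (c j) * (if j = j' then S else C)) = (N : ℂ) * (S - C) := by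
  have split : ∀ j j' : Fin N,
      c j' * ((starRingEnd ℂ) (c j) * (if j = j' then S else C))
        = (starRingEnd ℂ) (c j) * c j' * C
          + (if j = j' then (starRingEnd ℂ) (c j) * c j' * (S - C) else 0) := by
    intro j j'
    by_cases h : j = j' <;> simp [h] <;> ring
  rw [Finset.sum_congr rfl fun j _ => Finset.sum_congr rfl fun j' _ => split j j']
  simp only [Finset.sum_add_distrib]
  have e1 : ∀ j : Fin N, (∑ j' : Fin N, (starRingEnd ℂ) (c j) * c j' * C) = 0 := by
    intro j
    rw [← Finset.sum_mul, ← Finset.mul_sum, hsum0, mul_zero, zero_mul]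
  rw [Finset.sum_congr rfl fun j _ => e1 j, Finset.sum_const_zero, zero_add]
  have e2 : ∀ j : Fin N,
      (∑ j' : Fin N, if j = j' then (starRingEnd ℂ) (c j) * c j' * (S - C) else 0)
        = S - C := by
    intro j
    rw [Finset.sum_ite_eq univ j (fun j' => (starRingEnd ℂ) (c j) * c j' * (S - C)),
      if_pos (mem_univ j), hone j, one_mul]
  rw [Finset.sum_congr rfl fun j _ => e2 j, Finset.sum_const, card_univ, Fintype.card_fin,
    nsmul_eq_mul]

/-- Normalization of the quasi-Nambu-Goldstone mode
`|k⟩ = ∑_{j=1}^N e^{ikj} q_j^+ ψ^{⊗N}` at nonzero crystal momentum `k = 2πm/N`: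
`‖|k⟩‖² = N Δq²` with `Δq² = ⟨ψ|(q⁺)† q⁺|ψ⟩ - |⟨ψ|q⁺|ψ⟩|²`; in particular the
norm is independent of `k`. -/
theorem stmt_5 {N : ℕ} (hN : 1 ≤ N) (ψ : EuclideanSpace ℂ ι) (hψ : ‖ψ‖ = 1)
    (qp : EuclideanSpace ℂ ι →L[ℂ] EuclideanSpace ℂ ι)
    (m : ℤ) (hm : ¬ (N : ℤ) ∣ m) (k : ℝ) (hk : k = 2 * Real.pi * m / N)
    (kv : EuclideanSpace ℂ (Fin N → ι))
    (hkv : kv = ∑ j : Fin N,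
        Complex.exp (Complex.I * k * ((j : ℕ) + 1)) • siteOp qp j (prodState ψ)) :
    (‖kv‖ ^ 2 : ℂ) =
      (N : ℂ) * ((inner ℂ ψ ((ContinuousLinearMap.adjoint qp) (qp ψ)) : ℂ)
        - (‖(inner ℂ ψ (qp ψ) : ℂ)‖) ^ 2) := by
  have hψ1 : ∑ y : ι, (starRingEnd ℂ) (ψ y) * ψ y = 1 := by
    have h1 : (inner ℂ ψ ψ : ℂ) = (‖ψ‖ : ℂ) ^ 2 := inner_self_eq_norm_sq_to_K ψ
    rw [hψ] at h1
    simp only [PiLp.inner_apply, RCLike.inner_apply, Complex.ofReal_one, one_pow] at h1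
    rw [← h1]; exact Finset.sum_congr rfl fun y _ => mul_comm _ _
  have hsum0 : ∑ j : Fin N, Complex.exp (Complex.I * k * ((j : ℕ) + 1)) = 0 :=
    exp_sum_zero hN m hm k hk
  have hone : ∀ j : Fin N,
      (starRingEnd ℂ) (Complex.exp (Complex.I * k * ((j : ℕ) + 1)))
        * Complex.exp (Complex.I * k * ((j : ℕ) + 1)) = 1 := by
    intro j
    rw [← Complex.exp_conj, ← Complex.exp_add]
    have h7 : (starRingEnd ℂ) (Complex.I * k * ((j : ℕ) + 1))
        = -(Complex.I * k * ((j : ℕ) + 1)) := by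
      simp [map_mul, map_add, Complex.conj_I, Complex.conj_ofReal]
      try ring
    rw [h7, neg_add_cancel, Complex.exp_zero]
  have hnorm : (‖kv‖ ^ 2 : ℂ) = (inner ℂ kv kv : ℂ) := by
    rw [inner_self_eq_norm_sq_to_K]; norm_cast
  rw [hnorm, hkv, sum_inner]
  simp only [inner_sum, inner_smul_left, inner_smul_right, key_inner qp ψ hψ1]
  rw [main_alg _ _ _ hsum0 hone]
  congr 1
  have hSadj : (inner ℂ ψ ((ContinuousLinearMap.adjoint qp) (qp ψ)) : ℂ)
      = ∑ y : ι, (starRingEnd ℂ) (qp ψ y) * qp ψ y := by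
    rw [ContinuousLinearMap.adjoint_inner_right]
    simp only [PiLp.inner_apply, RCLike.inner_apply]
    exact Finset.sum_congr rfl fun y _ => mul_comm _ _
  have hTinner : (inner ℂ ψ (qp ψ) : ℂ) = ∑ y : ι, (starRingEnd ℂ) (ψ y) * qp ψ y := by
    simp only [PiLp.inner_apply, RCLike.inner_apply]
    exact Finset.sum_congr rfl fun y _ => mul_comm _ _
  rw [hSadj, hTinner]
  rw [mul_comm ((starRingEnd ℂ) (∑ y : ι, (starRingEnd ℂ) (ψ y) * qp ψ y))
      (∑ y : ι, (starRingEnd ℂ) (ψ y) * qp ψ y), Complex.mul_conj, Complex.normSq_eq_norm_sq]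
  push_cast
  ring

end
end

section
/- Consider a chain of N spin-s sites with periodic boundary conditions, lowest-weight product state |0⟩ = |-s⟩^{⊗N}, total raising operator S^+ = ∑_j s_j^+, and D^z_d = (i/2) ∑_j ( s_j^+ s_{j+d}^- - s_j^- s_{j+d}^+ ). Then for every n ≥ 0, D^z_d (S^+)^n |0⟩ = 0, i.e. D^z_d annihilates the entire ferromagnetic tower. -/
open Finset
open Fin.NatCast

section aux

variable {R : Type*} [Ring R]

lemma my_commute_lie {a b : R} (h : Commute a b) : ⁅a, b⁆ = 0 := by
  rw [Ring.lie_def, sub_eq_zero]; exact h.eq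

lemma my_lie_mul_left {a c : R} (b : R) (h : Commute a c) :
    ⁅a * b, c⁆ = a * ⁅b, c⁆ := by
  simp only [Ring.lie_def, mul_sub]
  rw [mul_assoc, ← mul_assoc c a b, ← h.eq, mul_assoc]

lemma my_lie_mul_right {b c : R} (a : R) (h : Commute b c) :
    ⁅a * b, c⁆ = ⁅a, c⁆ * b := by
  simp only [Ring.lie_def, sub_mul]
  rw [mul_assoc a b c, h.eq, ← mul_assoc, ← mul_assoc]

lemma my_lie_sum_sum {ι κ : Type*} (s : Finset ι) (t : Finset κ) (f : ι → R) (g : κ → R) :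
    ⁅∑ i ∈ s, f i, ∑ k ∈ t, g k⁆ = ∑ i ∈ s, ∑ k ∈ t, ⁅f i, g k⁆ := by
  simp only [Ring.lie_def, Finset.sum_mul, Finset.mul_sum, ← Finset.sum_sub_distrib]
  rw [Finset.sum_comm (s := t) (t := s)]
  simp [← Finset.sum_sub_distrib]

end aux

lemma my_tower {W : Type*} [AddCommGroup W] [Module ℂ W]
    (Dz Splus : Module.End ℂ W) (v0 : W)
    (h1 : Dz v0 = 0) (h2 : ⁅Dz, Splus⁆ v0 = 0) (h3 : ⁅⁅Dz, Splus⁆, Splus⁆ = 0) :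
    ∀ n : ℕ, Dz ((Splus ^ n) v0) = 0 := by
  set C := ⁅Dz, Splus⁆ with hC
  have hcs : C * Splus = Splus * C := by
    have := h3
    rw [Ring.lie_def, sub_eq_zero] at this
    exact this
  have hCn : ∀ n : ℕ, C ((Splus ^ n) v0) = 0 := by
    intro n
    induction n with
    | zero => simpa using h2
    | succ n ih =>
      have : C ((Splus ^ (n+1)) v0) = (C * Splus) ((Splus ^ n) v0) := by
        rw [pow_succ']; rfl
      rw [this, hcs]
      simp [Module.End.mul_apply, ih]
  intro n
  induction n with
  | zero => simpa using h1
  | succ n ih =>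
    have hds : Dz * Splus = Splus * Dz + C := by
      rw [hC, Ring.lie_def]; abel
    have : Dz ((Splus ^ (n+1)) v0) = (Dz * Splus) ((Splus ^ n) v0) := by
      rw [pow_succ']; rfl
    rw [this, hds]
    simp [Module.End.mul_apply, ih, hCn n]

/-- `D^z_d` annihilates the whole ferromagnetic tower: on a periodic chain of `N`
spin-`s` sites with lowest-weight product state `|0⟩` (`s_j⁻|0⟩ = 0`,
`s_j^z|0⟩ = -s|0⟩`), for every `n ≥ 0`, `D^z_d (S⁺)ⁿ |0⟩ = 0`. -/
theorem stmt_11 {W : Type*} [AddCommGroup W] [Module ℂ W] {N : ℕ} [NeZero N]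
    (s : ℝ) (sp sm sz : Fin N → Module.End ℂ W)
    (hzp : ∀ j, ⁅sz j, sp j⁆ = sp j)
    (hzm : ∀ j, ⁅sz j, sm j⁆ = -sm j)
    (hpm : ∀ j, ⁅sp j, sm j⁆ = (2 : ℂ) • sz j)
    (hcomm : ∀ j l, j ≠ l →
      ∀ a ∈ ({sp j, sm j, sz j} : Set (Module.End ℂ W)),
      ∀ b ∈ ({sp l, sm l, sz l} : Set (Module.End ℂ W)), Commute a b)
    (v0 : W) (hlow : ∀ j, sm j v0 = 0) (hwt : ∀ j, sz j v0 = (-(s : ℂ)) • v0)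
    (d : ℕ) (hd1 : 1 ≤ d) (hdN : d < N)
    (Dz Splus : Module.End ℂ W)
    (hDz : Dz = (Complex.I / 2) •
      ∑ j : Fin N, (sp j * sm (j + (d : Fin N)) - sm j * sp (j + (d : Fin N))))
    (hS : Splus = ∑ j : Fin N, sp j) :
    ∀ n : ℕ, Dz ((Splus ^ n) v0) = 0 := by
  letI : LieRing (Module.End ℂ W) := LieRing.ofAssociativeRing
  letI : LieAlgebra ℂ (Module.End ℂ W) := LieAlgebra.ofAssociativeAlgebra
  set e : Fin N := (d : Fin N) with he
  -- e ≠ 0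
  have heN : e ≠ 0 := by
    intro h
    have : (e : ℕ) = 0 := by rw [h]; rfl
    rw [he, Fin.val_natCast, Nat.mod_eq_of_lt hdN] at this
    omega
  have hne : ∀ j : Fin N, j ≠ j + e := by
    intro j h
    exact heN ((left_eq_add).mp h)
  -- commute shorthands
  have cpp : ∀ {j l : Fin N}, j ≠ l → Commute (sp j) (sp l) := fun h =>
    hcomm _ _ h _ (by simp) _ (by simp)
  have cmp : ∀ {j l : Fin N}, j ≠ l → Commute (sm j) (sp l) := fun h =>
    hcomm _ _ h _ (by simp) _ (by simp)
  have czp : ∀ {j l : Fin N}, j ≠ l → Commute (sz j) (sp l) := fun h =>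
    hcomm _ _ h _ (by simp) _ (by simp)
  have cms : ∀ {j l : Fin N}, j ≠ l → Commute (sm j) (sm l) := fun h =>
    hcomm _ _ h _ (by simp) _ (by simp)
  have cmz : ∀ {j l : Fin N}, j ≠ l → Commute (sz j) (sm l) := fun h =>
    hcomm _ _ h _ (by simp) _ (by simp)
  -- generic inner computation of ∑_l ⁅a j * b (j+e) , sp l⁆-type brackets
  have hCval : ⁅Dz, Splus⁆ =
      Complex.I • ∑ j : Fin N, (sz j * sp (j + e) - sp j * sz (j + e)) := by
    rw [hDz, hS, smul_lie, my_lie_sum_sum]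
    have inner : ∀ j : Fin N,
        ∑ l : Fin N, ⁅sp j * sm (j + e) - sm j * sp (j + e), sp l⁆ =
        (2 : ℂ) • (sz j * sp (j + e) - sp j * sz (j + e)) := by
      intro j
      have key : ∀ l : Fin N, ⁅sp j * sm (j + e) - sm j * sp (j + e), sp l⁆ =
          (if l = j then (2 : ℂ) • (sz j * sp (j + e)) else 0) +
          (if l = j + e then -((2 : ℂ) • (sp j * sz (j + e))) else 0) := by
        intro l
        rcases eq_or_ne l j with rfl | hlj
        · rw [if_pos rfl, if_neg (hne l), add_zero, sub_lie]
          rw [my_lie_mul_left _ (Commute.refl (sp l)),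
              my_commute_lie (cmp (Ne.symm (hne l))), mul_zero, zero_sub,
              my_lie_mul_right _ (cpp (Ne.symm (hne l)))]
          rw [← lie_skew, hpm, neg_mul, smul_mul_assoc, neg_neg]
        · rcases eq_or_ne l (j + e) with rfl | hld
          · rw [if_neg hlj, if_pos rfl, zero_add, sub_lie,
                my_lie_mul_left _ (cpp (hne j)), ← lie_skew, hpm,
                my_lie_mul_left _ (cmp (hne j)), lie_self, mul_zero, sub_zero]
            rw [mul_neg, mul_smul_comm]
          · rw [if_neg hlj, if_neg hld, add_zero, sub_lie,
                my_commute_lie (Commute.mul_left (cpp (Ne.symm hlj)) (cmp (Ne.symm hld))),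
                my_commute_lie (Commute.mul_left (cmp (Ne.symm hlj)) (cpp (Ne.symm hld))),
                sub_zero]
      rw [Finset.sum_congr rfl (fun l _ => key l), Finset.sum_add_distrib,
          Finset.sum_ite_eq' Finset.univ j, Finset.sum_ite_eq' Finset.univ (j + e)]
      simp [smul_sub, sub_eq_add_neg]
    rw [Finset.sum_congr rfl (fun j _ => inner j), ← Finset.smul_sum, smul_smul,
        div_mul_cancel₀ Complex.I two_ne_zero]
  have h1 : Dz v0 = 0 := by
    rw [hDz, LinearMap.smul_apply, LinearMap.sum_apply]
    have hterm : ∀ j : Fin N,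
        (sp j * sm (j + e) - sm j * sp (j + e)) v0 = 0 := by
      intro j
      rw [LinearMap.sub_apply, Module.End.mul_apply, hlow, map_zero,
          (cmp (hne j)).eq, Module.End.mul_apply, hlow, map_zero, sub_zero]
    rw [Finset.sum_congr rfl (fun j _ => hterm j)]
    simp
  have h2 : ⁅Dz, Splus⁆ v0 = 0 := by
    rw [hCval, LinearMap.smul_apply, LinearMap.sum_apply]
    have hterm : ∀ j : Fin N, (sz j * sp (j + e) - sp j * sz (j + e)) v0 =
        (-(s : ℂ)) • (sp (j + e) v0) - (-(s : ℂ)) • (sp j v0) := by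
      intro j
      rw [LinearMap.sub_apply, (czp (hne j)).eq, Module.End.mul_apply, hwt, map_smul,
          Module.End.mul_apply, hwt, map_smul]
    rw [Finset.sum_congr rfl (fun j _ => hterm j), Finset.sum_sub_distrib]
    have hre : ∑ j : Fin N, (-(s : ℂ)) • (sp (j + e) v0) =
        ∑ j : Fin N, (-(s : ℂ)) • (sp j v0) :=
      Fintype.sum_equiv (Equiv.addRight e) _ _ (fun j => rfl)
    rw [hre, sub_self, smul_zero]
  have h3 : ⁅⁅Dz, Splus⁆, Splus⁆ = 0 := by
    rw [hCval, hS, smul_lie, my_lie_sum_sum]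
    have inner : ∀ j : Fin N,
        ∑ l : Fin N, ⁅sz j * sp (j + e) - sp j * sz (j + e), sp l⁆ = 0 := by
      intro j
      have key : ∀ l : Fin N, ⁅sz j * sp (j + e) - sp j * sz (j + e), sp l⁆ =
          (if l = j then sp j * sp (j + e) else 0) +
          (if l = j + e then -(sp j * sp (j + e)) else 0) := by
        intro l
        rcases eq_or_ne l j with rfl | hlj
        · rw [if_pos rfl, if_neg (hne l), add_zero, sub_lie,
              my_lie_mul_right _ (cpp (Ne.symm (hne l))), hzp,
              my_lie_mul_left _ (Commute.refl (sp l)),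
              my_commute_lie (czp (Ne.symm (hne l))), mul_zero, sub_zero]
        · rcases eq_or_ne l (j + e) with rfl | hld
          · rw [if_neg hlj, if_pos rfl, zero_add, sub_lie,
                my_lie_mul_left _ (czp (hne j)), lie_self, mul_zero, zero_sub,
                my_lie_mul_left _ (cpp (hne j)), hzp]
          · rw [if_neg hlj, if_neg hld, add_zero, sub_lie,
                my_commute_lie (Commute.mul_left (czp (Ne.symm hlj)) (cpp (Ne.symm hld))),
                my_commute_lie (Commute.mul_left (cpp (Ne.symm hlj)) (czp (Ne.symm hld))),
                sub_zero]
      rw [Finset.sum_congr rfl (fun l _ => key l), Finset.sum_add_distrib,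
          Finset.sum_ite_eq' Finset.univ j, Finset.sum_ite_eq' Finset.univ (j + e)]
      simp
    rw [Finset.sum_congr rfl (fun j _ => inner j)]
    simp
  exact my_tower Dz Splus v0 h1 h2 h3
end
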